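/- (Forward martingale for sampling without replacement) Let v_1,...,v_N be vectors in a Banach space with average vbar, let V_1,...,V_m be obtained by uniform sampling without replacement from {v_1,...,v_N} with m <= N-1, and define M_k = (1/(N-k)) sum_{i=1}^k (V_i - vbar) for 1 <= k <= m and M_k = M_m for k > m. Then (M_k) is a martingale with respect to the filtration F_k = sigma(V_1,...,V_{min(k,m)}). -/

import Mathlib

open MeasureTheory

lemma sm_of_fibers {α B : Type*} (mα : MeasurableSpace α) [TopologicalSpace B]
    (f : α → B) (hfib : ∀ b, MeasurableSet[mα] (f ⁻¹' {b})) (hfin : (Set.range f).Finite) :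
    StronglyMeasurable[mα] f := by
  letI := mα
  exact (SimpleFunc.mk f hfib hfin).stronglyMeasurable

lemma filter_card_eq (m n : ℕ) (hn : n ≤ m) :
    (Finset.univ.filter (fun i : Fin m => (i : ℕ) < n)).card = n := by
  rw [show Finset.univ.filter (fun i : Fin m => (i : ℕ) < n)
      = Finset.map ⟨Fin.castLE hn, Fin.castLE_injective hn⟩ Finset.univ from ?_]
  · simp
  · ext i
    simp only [Finset.mem_filter, Finset.mem_univ, true_and, Finset.mem_map,
      Function.Embedding.coeFn_mk]
    constructor
    · intro h; exact ⟨⟨i, h⟩, rfl⟩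
    · rintro ⟨j, rfl⟩; exact j.isLt


/-- Forward martingale for sampling without replacement: sampling `m ≤ N - 1` of the
vectors `v₁,…,v_N` (with average `v̄`) uniformly without replacement — modelled by a
uniform random permutation `ω` of `{1,…,N}` with `V_i = v_{ω(i)}` — the process
`M_k = (1/(N-k)) ∑_{i≤k} (V_i - v̄)` for `k ≤ m`, `M_k = M_m` for `k > m`, is a
martingale for the filtration `F_k = σ(V_1,…,V_{min(k,m)})`. -/
theorem forward_martingale_sampling_without_replacement (N m : ℕ) (hm : m + 1 ≤ N)
    {B : Type*} [NormedAddCommGroup B] [NormedSpace ℝ B] [CompleteSpace B]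
    (v : Fin N → B) (vbar : B) (hvbar : vbar = (N : ℝ)⁻¹ • ∑ j, v j)
    (inst : MeasurableSpace (Equiv.Perm (Fin N))) (hinst : inst = ⊤)
    (ℱ : Filtration ℕ inst)
    (hℱ : ∀ k : ℕ, ℱ k =
      ⨆ i ∈ Finset.univ.filter (fun i : Fin m => (i : ℕ) < k),
        MeasurableSpace.comap
          (fun ω : Equiv.Perm (Fin N) => v (ω (Fin.castLE (Nat.le_of_succ_le hm) i))) ⊤)
    (M : ℕ → Equiv.Perm (Fin N) → B)
    (hM : ∀ (k : ℕ) (ω : Equiv.Perm (Fin N)), M k ω =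
      ((N : ℝ) - (min k m : ℕ))⁻¹ •
        ∑ i ∈ Finset.univ.filter (fun i : Fin m => (i : ℕ) < k),
          (v (ω (Fin.castLE (Nat.le_of_succ_le hm) i)) - vbar)) :
    Martingale M ℱ ((PMF.uniformOfFintype (Equiv.Perm (Fin N))).toMeasure) := by
  classical
  subst hinst
  letI : MeasurableSpace (Equiv.Perm (Fin N)) := ⊤
  haveI : MeasurableSingletonClass (Equiv.Perm (Fin N)) :=
    ⟨fun _ => MeasurableSpace.measurableSet_top⟩
  set μ := (PMF.uniformOfFintype (Equiv.Perm (Fin N))).toMeasure with hμdef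
  haveI : IsProbabilityMeasure μ := PMF.toMeasure.isProbabilityMeasure _
  set pos : Fin m → Fin N := Fin.castLE (Nat.le_of_succ_le hm) with hpos
  -- comap inequalities
  have hcomap_le : ∀ (n : ℕ) (i : Fin m), (i : ℕ) < n →
      MeasurableSpace.comap (fun ω : Equiv.Perm (Fin N) => v (ω (pos i))) ⊤ ≤ ℱ n := by
    intro n i hi
    rw [hℱ n]
    exact le_iSup₂ (f := fun (i : Fin m)
        (_ : i ∈ Finset.univ.filter (fun i : Fin m => (i : ℕ) < n)) =>
        MeasurableSpace.comap (fun ω : Equiv.Perm (Fin N) => v (ω (pos i))) ⊤)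
      i (Finset.mem_filter.mpr ⟨Finset.mem_univ _, hi⟩)
  -- adaptedness
  have hadp : StronglyAdapted ℱ M := by
    intro n
    have hsum : StronglyMeasurable[ℱ n] (fun ω : Equiv.Perm (Fin N) =>
        ∑ i ∈ Finset.univ.filter (fun i : Fin m => (i : ℕ) < n), (v (ω (pos i)) - vbar)) := by
      refine Finset.stronglyMeasurable_fun_sum _ fun i hi =>
        StronglyMeasurable.sub ?_ stronglyMeasurable_const
      refine sm_of_fibers (ℱ n) _ (fun b => ?_) ((Set.finite_range v).subset ?_)
      · exact hcomap_le n i (by simpa using hi) _ ⟨{b}, trivial, rfl⟩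
      · rintro _ ⟨ω, rfl⟩; exact ⟨_, rfl⟩
    have h2 := hsum.const_smul (((N : ℝ) - (min n m : ℕ))⁻¹)
    have heq : M n = fun ω : Equiv.Perm (Fin N) => ((N : ℝ) - (min n m : ℕ))⁻¹ •
        ∑ i ∈ Finset.univ.filter (fun i : Fin m => (i : ℕ) < n), (v (ω (pos i)) - vbar) :=
      funext fun ω => hM n ω
    rw [heq]
    exact h2
  -- integrability
  have hint : ∀ n, Integrable (M n) μ := fun n => Integrable.of_finite
  -- one-step condexp
  have key : ∀ n : ℕ, μ[M (n + 1)|ℱ n] =ᵐ[μ] M n := by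
    intro n
    refine (ae_eq_condExp_of_forall_setIntegral_eq (ℱ.le n) (hint (n + 1))
      (fun s _ _ => (hint n).integrableOn) (fun s hs _ => ?_)
      (StronglyMeasurable.aestronglyMeasurable (hadp n))).symm
    -- ⊢ ∫ x in s, M n x ∂μ = ∫ x in s, M (n + 1) x ∂μ
    have hdiff : ∑ ω ∈ (Set.toFinite s).toFinset, (M (n + 1) ω - M n ω) = 0 := by
      rcases le_or_gt m n with hmn | hnm
      · -- trivial case: M (n+1) = M n
        have hMM : M (n + 1) = M n := by
          funext ω
          rw [hM, hM]
          have h1 : min (n + 1) m = min n m := by omega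
          have h2 : Finset.univ.filter (fun i : Fin m => (i : ℕ) < n + 1)
              = Finset.univ.filter (fun i : Fin m => (i : ℕ) < n) := by
            ext i
            have := i.isLt
            simp only [Finset.mem_filter, Finset.mem_univ, true_and]
            omega
          rw [h1, h2]
        rw [hMM]
        simp
      · -- main case n < m
        have hn2N : n + 2 ≤ N := by omega
        set npos : Fin m := ⟨n, hnm⟩ with hnpos
        set Fn := Finset.univ.filter (fun i : Fin m => (i : ℕ) < n) with hFn
        set r : Equiv.Perm (Fin N) → (Fin m → Fin N) := fun ω i => if (i : ℕ) < n then ω (pos i) else pos npos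
          with hr
        -- s is measurable w.r.t. comap r
        have hsr : MeasurableSet[MeasurableSpace.comap r ⊤] s := by
          refine (?_ : ℱ n ≤ MeasurableSpace.comap r ⊤) s hs
          rw [hℱ n]
          refine iSup₂_le fun i hi => ?_
          have hi' : (i : ℕ) < n := by simpa using hi
          have hfun : (fun ω : Equiv.Perm (Fin N) => v (ω (pos i))) = (fun g : Fin m → Fin N => v (g i)) ∘ r := by
            funext ω; simp [hr, hi']
          rw [hfun, ← MeasurableSpace.comap_comp]
          exact MeasurableSpace.comap_mono le_top
        rw [MeasurableSpace.measurableSet_comap] at hsr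
        obtain ⟨t, -, hst⟩ := hsr
        -- the fiber computation
        have hfiber : ∀ gv : Fin m → Fin N,
            ∑ ω ∈ Finset.univ.filter (fun ω : Equiv.Perm (Fin N) => r ω = gv), (M (n + 1) ω - M n ω) = 0 := by
          intro gv
          set A := Finset.univ.filter (fun ω : Equiv.Perm (Fin N) => r ω = gv) with hA
          rcases Finset.eq_empty_or_nonempty A with hAe | hAne
          · simp [hAe]
          obtain ⟨ω₀, hω₀⟩ := hAne
          have hrA : ∀ ω ∈ A, r ω = gv := by
            intro ω hω; simpa [hA] using hω
          have hmemA : ∀ ω ∈ A, ∀ i : Fin m, (i : ℕ) < n → ω (pos i) = gv i := by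
            intro ω hω i hi
            rw [← hrA ω hω]
            simp [hr, hi]
          have hgv : ∀ i : Fin m, (i : ℕ) < n → gv i = ω₀ (pos i) :=
            fun i hi => (hmemA ω₀ hω₀ i hi).symm
          set R := Fn.image gv with hRdef
          have hposinj : Function.Injective pos := Fin.castLE_injective _
          have hginj : Set.InjOn gv ↑Fn := by
            intro i hi j hj hij
            have hi' : (i : ℕ) < n := by simpa [hFn] using hi
            have hj' : (j : ℕ) < n := by simpa [hFn] using hj
            have hpij : ω₀ (pos i) = ω₀ (pos j) := by
              rw [← hgv i hi', ← hgv j hj', hij]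
            exact hposinj (ω₀.injective hpij)
          have hRcard : R.card = n := by
            rw [hRdef, Finset.card_image_of_injOn hginj, hFn, filter_card_eq m n (le_of_lt hnm)]
          have hpn_not : ∀ ω ∈ A, ω (pos npos) ∉ R := by
            intro ω hω hmem
            obtain ⟨i, hi, hgi⟩ := Finset.mem_image.mp hmem
            have hi' : (i : ℕ) < n := by simpa [hFn] using hi
            have : ω (pos i) = ω (pos npos) := by rw [hmemA ω hω i hi', hgi]
            have hipos : i = npos := hposinj (ω.injective this)
            rw [hnpos] at hipos
            have : (i : ℕ) = n := by rw [hipos]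
            omega
          -- equal fiber cardinalities by swapping
          have hswap : ∀ j j' : Fin N, j ∉ R → j' ∉ R →
              (A.filter (fun ω => ω (pos npos) = j)).card
                = (A.filter (fun ω => ω (pos npos) = j')).card := by
            have hmem : ∀ (a b : Fin N), a ∉ R → b ∉ R →
                ∀ ω ∈ A.filter (fun ω => ω (pos npos) = a),
                ω.trans (Equiv.swap a b) ∈ A.filter (fun ω => ω (pos npos) = b) := by
              intro a b ha hb ω hω
              rw [Finset.mem_filter] at hω ⊢
              obtain ⟨hωA, hωa⟩ := hω
              have hrω : r ω = gv := hrA ω hωA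
              constructor
              · have : r (ω.trans (Equiv.swap a b)) = gv := by
                  funext i
                  by_cases hi : (i : ℕ) < n
                  · have h1 : gv i ∈ R :=
                      Finset.mem_image_of_mem gv
                        (by simp only [hFn, Finset.mem_filter, Finset.mem_univ, true_and]; exact hi)
                    have h2 : ω (pos i) = gv i := hmemA ω hωA i hi
                    simp only [hr, if_pos hi, Equiv.trans_apply, h2]
                    exact Equiv.swap_apply_of_ne_of_ne
                      (fun h => ha (by rw [← h]; exact h1)) (fun h => hb (by rw [← h]; exact h1))
                  · have h3 := congrFun hrω i
                    simp only [hr, if_neg hi] at h3 ⊢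
                    exact h3
                simp only [hA, Finset.mem_filter, Finset.mem_univ, true_and]
                exact this
              · simp only [Equiv.trans_apply, hωa, Equiv.swap_apply_left]
            intro j j' hj hj'
            refine Finset.card_bij' (fun ω _ => ω.trans (Equiv.swap j j'))
              (fun ω _ => ω.trans (Equiv.swap j' j))
              (fun ω hω => hmem j j' hj hj' ω hω)
              (fun ω hω => hmem j' j hj' hj ω hω) ?_ ?_
            · intro ω hω
              ext x
              simp only [Equiv.trans_apply]
              rw [Equiv.swap_comm j' j, Equiv.swap_apply_self]
            · intro ω hω
              ext x
              simp only [Equiv.trans_apply]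
              rw [Equiv.swap_comm j' j, Equiv.swap_apply_self]
          set c := (A.filter (fun ω => ω (pos npos) = ω₀ (pos npos))).card with hc
          have hcard : ∀ j ∈ Rᶜ, (A.filter (fun ω => ω (pos npos) = j)).card = c :=
            fun j hj => hswap j (ω₀ (pos npos)) (by simpa using hj) (hpn_not ω₀ hω₀)
          have hmaps : ∀ ω ∈ A, ω (pos npos) ∈ Rᶜ :=
            fun ω hω => Finset.mem_compl.mpr (hpn_not ω hω)
          rw [← Finset.sum_fiberwise_of_maps_to hmaps]
          -- evaluate each inner sum
          set S : B := ∑ i ∈ Fn, (v (gv i) - vbar) with hS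
          have hFinsert : Finset.univ.filter (fun i : Fin m => (i : ℕ) < n + 1)
              = insert npos Fn := by
            ext i
            simp only [hFn, hnpos, Finset.mem_filter, Finset.mem_univ, true_and,
              Finset.mem_insert, Fin.ext_iff]
            omega
          have hnpos_not : npos ∉ Fn := by
            have : (npos : ℕ) = n := rfl
            simp only [hFn, Finset.mem_filter, Finset.mem_univ, true_and, this]
            omega
          have hMn : ∀ ω ∈ A, M n ω = ((N : ℝ) - n)⁻¹ • S := by
            intro ω hω
            rw [hM]
            have h1 : min n m = n := by omega
            rw [h1]
            congr 1
            refine Finset.sum_congr rfl fun i hi => ?_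
            have hi' : (i : ℕ) < n := by simpa [hFn] using hi
            rw [hmemA ω hω i hi']
          have hMn1 : ∀ j : Fin N, ∀ ω ∈ A.filter (fun ω => ω (pos npos) = j),
              M (n + 1) ω = ((N : ℝ) - n - 1)⁻¹ • (S + (v j - vbar)) := by
            intro j ω hω
            rw [Finset.mem_filter] at hω
            obtain ⟨hωA, hωj⟩ := hω
            rw [hM]
            have h1 : min (n + 1) m = n + 1 := by omega
            have h2 : ((N : ℝ) - ((n + 1 : ℕ) : ℝ)) = (N : ℝ) - n - 1 := by push_cast; ring
            have h3 : ∑ i ∈ Fn, (v (ω (pos i)) - vbar) = S := by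
              refine Finset.sum_congr rfl fun i hi => ?_
              have hi' : (i : ℕ) < n := by simpa [hFn] using hi
              rw [hmemA ω hωA i hi']
            rw [h1, hFinsert, Finset.sum_insert hnpos_not, hωj, h3, h2, add_comm]
          have hinner : ∀ j ∈ Rᶜ,
              ∑ ω ∈ A.filter (fun ω => ω (pos npos) = j), (M (n + 1) ω - M n ω)
              = c • (((N : ℝ) - n - 1)⁻¹ • (S + (v j - vbar)) - ((N : ℝ) - n)⁻¹ • S) := by
            intro j hj
            rw [Finset.sum_congr rfl (fun ω hω => ?_), Finset.sum_const, hcard j hj]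
            rw [hMn1 j ω hω, hMn ω (Finset.mem_filter.mp hω).1]
          rw [Finset.sum_congr rfl hinner, ← Finset.smul_sum]
          -- pure algebra
          have hN0 : (N : ℝ) ≠ 0 := Nat.cast_ne_zero.mpr (by omega)
          have hnN : ((n : ℝ) + 2) ≤ (N : ℝ) := by exact_mod_cast hn2N
          have ha : (N : ℝ) - n ≠ 0 := by linarith
          have ha1 : (N : ℝ) - n - 1 ≠ 0 := by linarith
          have hT : ∑ i ∈ Fn, v (gv i) = ∑ j ∈ R, v j := (Finset.sum_image fun x hx y hy h =>
            hginj hx hy h).symm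
          have hSval : S = (∑ j ∈ R, v j) - (n : ℝ) • vbar := by
            rw [hS, Finset.sum_sub_distrib, Finset.sum_const, hT, hFn,
              filter_card_eq m n (le_of_lt hnm), ← Nat.cast_smul_eq_nsmul ℝ]
          have hcompl_card : Rᶜ.card = N - n := by
            rw [Finset.card_compl, hRcard]
            simp
          have hsumcompl : ∑ j ∈ Rᶜ, v j = (∑ j, v j) - ∑ j ∈ R, v j := by
            rw [eq_sub_iff_add_eq, Finset.sum_compl_add_sum]
          have hW : (∑ j, v j) = (N : ℝ) • vbar := by
            rw [hvbar, smul_smul, mul_inv_cancel₀ hN0, one_smul]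
          have hzero : ∑ j ∈ Rᶜ,
              (((N : ℝ) - n - 1)⁻¹ • (S + (v j - vbar)) - ((N : ℝ) - n)⁻¹ • S) = 0 := by
            have hrw : ∀ j ∈ Rᶜ,
                ((N : ℝ) - n - 1)⁻¹ • (S + (v j - vbar)) - ((N : ℝ) - n)⁻¹ • S
                = (((N : ℝ) - n - 1)⁻¹ • (S - vbar) - ((N : ℝ) - n)⁻¹ • S)
                  + ((N : ℝ) - n - 1)⁻¹ • v j := by
              intro j _
              module
            rw [Finset.sum_congr rfl hrw, Finset.sum_add_distrib, ← Finset.smul_sum,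
              Finset.sum_const, hsumcompl, hW, hcompl_card, hSval,
              ← Nat.cast_smul_eq_nsmul ℝ, Nat.cast_sub (by omega : n ≤ N)]
            set T := ∑ j ∈ R, v j
            match_scalars
            · field_simp
              ring
            · field_simp
              ring
          rw [hzero, smul_zero]
        -- decompose the sum over s into fibers
        have hsplit : ∑ ω ∈ (Set.toFinite s).toFinset, (M (n + 1) ω - M n ω)
            = ∑ gv ∈ (Finset.univ : Finset (Fin m → Fin N)),
                ∑ ω ∈ ((Set.toFinite s).toFinset).filter (fun ω => r ω = gv),
                  (M (n + 1) ω - M n ω) :=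
          (Finset.sum_fiberwise_of_maps_to (fun x _ => Finset.mem_univ _) _).symm
        rw [hsplit]
        refine Finset.sum_eq_zero fun gv _ => ?_
        by_cases hgt : gv ∈ t
        · rw [show ((Set.toFinite s).toFinset).filter (fun ω => r ω = gv)
              = Finset.univ.filter (fun ω : Equiv.Perm (Fin N) => r ω = gv) from ?_]
          · exact hfiber gv
          · ext ω
            simp only [Finset.mem_filter, Finset.mem_univ, true_and, Set.Finite.mem_toFinset]
            constructor
            · rintro ⟨-, h⟩; exact h
            · intro h
              refine ⟨?_, h⟩
              rw [← hst]
              show r ω ∈ t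
              rw [h]; exact hgt
        · rw [Finset.filter_false_of_mem, Finset.sum_empty]
          intro ω hω h
          rw [Set.Finite.mem_toFinset, ← hst] at hω
          exact hgt (by rw [← h]; exact hω)
    -- convert integrals to sums
    have hsfin : s = ((Set.toFinite s).toFinset : Set (Equiv.Perm (Fin N))) :=
      (Set.Finite.coe_toFinset (Set.toFinite s)).symm
    rw [hsfin, setIntegral_finset (μ := μ) _ (hint n).integrableOn,
      setIntegral_finset (μ := μ) _ (hint (n + 1)).integrableOn]
    simp only [measureReal_def]
    have hwt : ∀ f : Equiv.Perm (Fin N) → B,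
        ∑ x ∈ (Set.toFinite s).toFinset, (μ {x}).toReal • f x
        = ((Fintype.card (Equiv.Perm (Fin N)) : ℝ))⁻¹ •
            ∑ x ∈ (Set.toFinite s).toFinset, f x := by
      intro f
      rw [Finset.smul_sum]
      refine Finset.sum_congr rfl fun x _ => ?_
      congr 1
      rw [PMF.toMeasure_apply_singleton _ _ MeasurableSpace.measurableSet_top]
      simp [PMF.uniformOfFintype_apply, ENNReal.toReal_inv]
    rw [hwt, hwt]
    rw [Finset.sum_sub_distrib, sub_eq_zero] at hdiff
    rw [hdiff]
  -- assemble the martingale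
  have general : ∀ j i : ℕ, i ≤ j → μ[M j|ℱ i] =ᵐ[μ] M i := by
    intro j
    induction j with
    | zero =>
      intro i hij
      have hi0 : i = 0 := Nat.le_zero.mp hij
      subst hi0
      rw [condExp_of_stronglyMeasurable (ℱ.le 0) (hadp 0) (hint 0)]
    | succ j ih =>
      intro i hij
      rcases Nat.lt_or_ge i (j + 1) with h | h
      · have hij' : i ≤ j := by omega
        calc μ[M (j + 1)|ℱ i] =ᵐ[μ] μ[μ[M (j + 1)|ℱ j]|ℱ i] :=
              (condExp_condExp_of_le (ℱ.mono hij') (ℱ.le j)).symm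
          _ =ᵐ[μ] μ[M j|ℱ i] := condExp_congr_ae (key j)
          _ =ᵐ[μ] M i := ih i hij'
      · have hi : i = j + 1 := by omega
        subst hi
        rw [condExp_of_stronglyMeasurable (ℱ.le _) (hadp _) (hint _)]
  exact ⟨hadp, fun i j hij => general j i hij⟩
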